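/- Let τ = τ⁰-τ¹-⋯-τˢ be a multi-pattern and for each 0 ≤ i ≤ s let f_i be a trivial bijection (one of: identity, reverse, complement, or reverse composed with complement). Then for every n ≥ 0 and k ≥ 1, the number of k-ary words of length n avoiding τ equals the number of k-ary words of length n avoiding the multi-pattern f₀(τ⁰)-f₁(τ¹)-⋯-f_s(τˢ). -/

import Mathlib

/-- A word `σ : Fin n → Fin k` has an occurrence of the subword pattern `p : Fin m → Fin l`
at position `i` if `i + m ≤ n` and the corresponding letters are order-isomorphic to `p`. -/
def OccursAt {m l n k : ℕ} (p : Fin m → Fin l) (σ : Fin n → Fin k) (i : ℕ) : Prop :=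
  ∃ h : i + m ≤ n, ∀ a b : Fin m,
    (σ ⟨i + a, lt_of_lt_of_le (Nat.add_lt_add_left a.isLt i) h⟩ <
      σ ⟨i + b, lt_of_lt_of_le (Nat.add_lt_add_left b.isLt i) h⟩) ↔ p a < p b

/-- `σ` avoids the subword pattern `p`. -/
def AvoidsPat {m l n k : ℕ} (p : Fin m → Fin l) (σ : Fin n → Fin k) : Prop :=
  ∀ i : ℕ, ¬ OccursAt p σ i

/-- `σ` contains the multi-pattern `τ⁰-τ¹-⋯` (blocks indexed by `Fin s`): there are
positions `i j`, with each block's occurrence ending before the next block's start,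
such that `τ j` occurs at `i j` for every `j`. -/
def ContainsMulti {s : ℕ} {m r : Fin s → ℕ} (τ : ∀ j : Fin s, Fin (m j) → Fin (r j))
    {n k : ℕ} (σ : Fin n → Fin k) : Prop :=
  ∃ i : Fin s → ℕ,
    (∀ (j : Fin s) (h : (j : ℕ) + 1 < s), i j + m j ≤ i ⟨(j : ℕ) + 1, h⟩) ∧
      ∀ j : Fin s, OccursAt (τ j) σ (i j)

/-- The reverse of a pattern: `R(p)(a) = p(m - 1 - a)`. -/
def PatRev {m l : ℕ} (p : Fin m → Fin l) : Fin m → Fin l := fun a => p a.rev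

/-- The complement of a pattern: `C(p)(a) = l - 1 - p(a)`. -/
def PatCompl {m l : ℕ} (p : Fin m → Fin l) : Fin m → Fin l := fun a => (p a).rev

/-- A trivial bijection on patterns is one of: identity, reverse, complement,
or reverse composed with complement. -/
def IsTrivialBij {m l : ℕ} (f : (Fin m → Fin l) → (Fin m → Fin l)) : Prop :=
  f = id ∨ f = PatRev ∨ f = PatCompl ∨ f = fun p => PatRev (PatCompl p)

namespace Stmt12Aux

structure Pat where
  m : ℕ
  l : ℕ
  pat : Fin m → Fin l

variable {n k : ℕ}

def POcc (p : Pat) (σ : Fin n → Fin k) (i : ℕ) : Prop := OccursAt p.pat σ i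

/-- contains the list of patterns in order, all starting at position `≥ t`. -/
def CF : List Pat → (Fin n → Fin k) → ℕ → Prop
  | [], _, _ => True
  | p :: L, σ, t => ∃ i, t ≤ i ∧ POcc p σ i ∧ CF L σ (i + p.m)

lemma cf_mono {L : List Pat} {σ : Fin n → Fin k} {t t' : ℕ} (h : t ≤ t') :
    CF L σ t' → CF L σ t := by
  cases L with
  | nil => exact fun _ => trivial
  | cons p L => rintro ⟨i, hi, ho, hc⟩; exact ⟨i, le_trans h hi, ho, hc⟩

def takeW (σ : Fin n → Fin k) (t : ℕ) (h : t ≤ n) : Fin t → Fin k :=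
  fun a => σ ⟨a, by omega⟩

def dropW (σ : Fin n → Fin k) (t : ℕ) (h : t ≤ n) : Fin (n - t) → Fin k :=
  fun a => σ ⟨t + a, by omega⟩

lemma occ_take {p : Pat} {σ : Fin n → Fin k} {t : ℕ} (h : t ≤ n) {i : ℕ} :
    POcc p (takeW σ t h) i ↔ POcc p σ i ∧ i + p.m ≤ t := by
  constructor
  · rintro ⟨hb, hc⟩
    exact ⟨⟨by omega, fun a b => hc a b⟩, hb⟩
  · rintro ⟨⟨hb, hc⟩, hle⟩
    exact ⟨hle, fun a b => hc a b⟩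

lemma occ_drop {p : Pat} {σ : Fin n → Fin k} {t : ℕ} (h : t ≤ n) {j : ℕ} :
    POcc p (dropW σ t h) j ↔ POcc p σ (t + j) := by
  constructor
  · rintro ⟨hb, hc⟩
    refine ⟨by omega, fun a b => ?_⟩
    have e1 : (⟨t + j + a, by omega⟩ : Fin n) = ⟨t + (j + a), by omega⟩ := by
      apply Fin.ext; simp; omega
    have e2 : (⟨t + j + b, by omega⟩ : Fin n) = ⟨t + (j + b), by omega⟩ := by
      apply Fin.ext; simp; omega
    rw [e1, e2]; exact hc a b
  · rintro ⟨hb, hc⟩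
    refine ⟨by omega, fun a b => ?_⟩
    show (σ ⟨t + (j + a), _⟩ < σ ⟨t + (j + b), _⟩) ↔ _
    have e1 : (⟨t + (j + a), by omega⟩ : Fin n) = ⟨t + j + a, by omega⟩ := by
      apply Fin.ext; simp; omega
    have e2 : (⟨t + (j + b), by omega⟩ : Fin n) = ⟨t + j + b, by omega⟩ := by
      apply Fin.ext; simp; omega
    rw [e1, e2]; exact hc a b

lemma cf_drop {L : List Pat} {σ : Fin n → Fin k} {t : ℕ} (h : t ≤ n) :
    ∀ u, CF L (dropW σ t h) u ↔ CF L σ (t + u) := by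
  induction L with
  | nil => intro u; simp [CF]
  | cons p L ih =>
    intro u
    constructor
    · rintro ⟨j, hj, ho, hc⟩
      exact ⟨t + j, by omega, (occ_drop h).1 ho, by
        have := (ih (j + p.m)).1 hc
        have e : t + (j + p.m) = t + j + p.m := by omega
        rwa [e] at this⟩
    · rintro ⟨i, hi, ho, hc⟩
      refine ⟨i - t, by omega, ?_, ?_⟩
      · rw [occ_drop h]; have e : t + (i - t) = i := by omega
        rwa [e]
      · rw [ih]; have e : t + (i - t + p.m) = i + p.m := by omega
        rwa [e]

end Stmt12Aux

namespace Stmt12Aux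
variable {n k : ℕ}

def complW (σ : Fin n → Fin k) : Fin n → Fin k := fun a => (σ a).rev
def revW (σ : Fin n → Fin k) : Fin n → Fin k := fun a => σ a.rev

lemma occ_compl {m l : ℕ} {p : Fin m → Fin l} {σ : Fin n → Fin k} {i : ℕ} :
    OccursAt (PatCompl p) (complW σ) i ↔ OccursAt p σ i := by
  constructor
  · rintro ⟨hb, hc⟩
    refine ⟨hb, fun a b => ?_⟩
    have := hc b a
    simpa [complW, PatCompl, Fin.rev_lt_rev] using this
  · rintro ⟨hb, hc⟩
    refine ⟨hb, fun a b => ?_⟩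
    have := hc b a
    simpa [complW, PatCompl, Fin.rev_lt_rev] using this

lemma occ_rev {m l : ℕ} {p : Fin m → Fin l} {σ : Fin n → Fin k} {i : ℕ}
    (h : OccursAt p σ i) : OccursAt (PatRev p) (revW σ) (n - m - i) := by
  obtain ⟨hb, hc⟩ := h
  refine ⟨by omega, fun a b => ?_⟩
  have key : ∀ c : Fin m,
      revW σ ⟨n - m - i + c, by omega⟩ = σ ⟨i + (c.rev : Fin m), by
        have := (c.rev).isLt; omega⟩ := by
    intro c
    show σ (Fin.rev ⟨n - m - i + c, _⟩) = _
    congr 1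
    apply Fin.ext
    simp [Fin.rev, Fin.val_rev]
    omega
  rw [key a, key b]
  exact hc a.rev b.rev

lemma patRev_patRev {m l : ℕ} (p : Fin m → Fin l) : PatRev (PatRev p) = p := by
  funext a; simp [PatRev, Fin.rev_rev]

lemma revW_revW (σ : Fin n → Fin k) : revW (revW σ) = σ := by
  funext a; simp [revW, Fin.rev_rev]

lemma patCompl_patCompl {m l : ℕ} (p : Fin m → Fin l) : PatCompl (PatCompl p) = p := by
  funext a; simp [PatCompl, Fin.rev_rev]

lemma complW_complW (σ : Fin n → Fin k) : complW (complW σ) = σ := by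
  funext a; simp [complW, Fin.rev_rev]

lemma avoids_rev {m l : ℕ} {p : Fin m → Fin l} {σ : Fin n → Fin k} :
    AvoidsPat (PatRev p) (revW σ) ↔ AvoidsPat p σ := by
  constructor
  · intro hA i h
    exact hA _ (occ_rev h)
  · intro hA i h
    have := occ_rev h
    rw [patRev_patRev, revW_revW] at this
    exact hA _ this

lemma avoids_compl {m l : ℕ} {p : Fin m → Fin l} {σ : Fin n → Fin k} :
    AvoidsPat (PatCompl p) (complW σ) ↔ AvoidsPat p σ := by
  constructor
  · intro hA i h
    exact hA i (occ_compl.2 h)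
  · intro hA i h
    exact hA i (occ_compl.1 h)

def complWEquiv : (Fin n → Fin k) ≃ (Fin n → Fin k) :=
  Function.Involutive.toPerm complW (fun σ => complW_complW σ)

def revWEquiv : (Fin n → Fin k) ≃ (Fin n → Fin k) :=
  Function.Involutive.toPerm revW (fun σ => revW_revW σ)

lemma avoidCard_compl {m l : ℕ} (p : Fin m → Fin l) :
    Nat.card {σ : Fin n → Fin k // AvoidsPat p σ} =
      Nat.card {σ : Fin n → Fin k // AvoidsPat (PatCompl p) σ} := by
  apply Nat.card_congr
  refine (complWEquiv (n := n) (k := k)).subtypeEquiv fun σ => ?_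
  exact avoids_compl.symm

lemma avoidCard_rev {m l : ℕ} (p : Fin m → Fin l) :
    Nat.card {σ : Fin n → Fin k // AvoidsPat p σ} =
      Nat.card {σ : Fin n → Fin k // AvoidsPat (PatRev p) σ} := by
  apply Nat.card_congr
  refine (revWEquiv (n := n) (k := k)).subtypeEquiv fun σ => ?_
  exact avoids_rev.symm

lemma avoidCard_triv {m l : ℕ} (f : (Fin m → Fin l) → (Fin m → Fin l))
    (hf : IsTrivialBij f) (p : Fin m → Fin l) :
    Nat.card {σ : Fin n → Fin k // AvoidsPat p σ} =
      Nat.card {σ : Fin n → Fin k // AvoidsPat (f p) σ} := by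
  rcases hf with h | h | h | h <;> subst h
  · rfl
  · exact avoidCard_rev p
  · exact avoidCard_compl p
  · rw [avoidCard_compl p]; exact avoidCard_rev (PatCompl p)

end Stmt12Aux

namespace Stmt12Aux
variable {k : ℕ}

/-- first occurrence ends exactly at the end of the word -/
def FE (p : Pat) {e : ℕ} (w : Fin e → Fin k) : Prop :=
  (∃ i, POcc p w i) ∧ ∀ i, POcc p w i → i + p.m = e

noncomputable def AvN (k t : ℕ) (p : Pat) : ℕ :=
  Nat.card {σ : Fin t → Fin k // AvoidsPat p.pat σ}

noncomputable def BN (k e : ℕ) (p : Pat) : ℕ :=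
  Nat.card {w : Fin e → Fin k // FE p w}

noncomputable def ANL (k n : ℕ) (L : List Pat) : ℕ :=
  Nat.card {σ : Fin n → Fin k // ¬ CF L σ 0}

def wordSplit (e n k : ℕ) (h : e ≤ n) :
    (Fin n → Fin k) ≃ (Fin e → Fin k) × (Fin (n - e) → Fin k) where
  toFun σ := (takeW σ e h, dropW σ e h)
  invFun wu := fun x => if hx : (x : ℕ) < e then wu.1 ⟨x, hx⟩ else wu.2 ⟨x - e, by omega⟩
  left_inv σ := by
    funext x
    by_cases hx : (x : ℕ) < e
    · simp only [hx, dif_pos]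
      rfl
    · simp only [hx, dif_neg]
      show σ _ = σ x
      congr 1
      apply Fin.ext
      show e + ((x : ℕ) - e) = x
      omega
  right_inv wu := by
    refine Prod.ext ?_ ?_
    · funext a
      show (if hx : (a : ℕ) < e then _ else _) = wu.1 a
      rw [dif_pos a.isLt]
    · funext b
      show (if hx : e + (b : ℕ) < e then _ else _) = wu.2 b
      rw [dif_neg (by omega)]
      have : (⟨(⟨e + (b : ℕ), by omega⟩ : Fin n).val - e,
          by show e + (b : ℕ) - e < n - e; omega⟩ : Fin (n - e)) = b := by
        apply Fin.ext
        show e + (b : ℕ) - e = (b : ℕ)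
        omega
      rw [this]

lemma wordSplit_fst {e n : ℕ} (h : e ≤ n) (σ : Fin n → Fin k) :
    (wordSplit e n k h σ).1 = takeW σ e h := rfl

lemma wordSplit_snd {e n : ℕ} (h : e ≤ n) (σ : Fin n → Fin k) :
    (wordSplit e n k h σ).2 = dropW σ e h := rfl

noncomputable def existsUniqueSigmaEquiv {α : Type*} {N : ℕ} (P : ℕ → α → Prop)
    (hbound : ∀ a e, P e a → e < N)
    (huniq : ∀ a e e', P e a → P e' a → e = e') :
    {a // ∃ e, P e a} ≃ Σ e : Fin N, {a // P e a} where
  toFun a := ⟨⟨Classical.choose a.2, hbound _ _ (Classical.choose_spec a.2)⟩,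
    ⟨a.1, Classical.choose_spec a.2⟩⟩
  invFun x := ⟨x.2.1, ⟨x.1, x.2.2⟩⟩
  left_inv a := rfl
  right_inv := by
    have ext : ∀ x y : Σ e : Fin N, {a // P e a},
        x.1 = y.1 → (x.2 : α) = (y.2 : α) → x = y := by
      rintro ⟨e, a, ha⟩ ⟨e', a', ha'⟩ h1 h2
      cases h1
      cases (Subtype.ext h2 : (⟨a, ha⟩ : {a // P (e : ℕ) a}) = ⟨a', ha'⟩)
      rfl
    rintro ⟨e, a, h⟩
    have he : Classical.choose (⟨e.val, h⟩ : ∃ e', P e' a) = e.val :=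
      huniq a _ _ (Classical.choose_spec (⟨e.val, h⟩ : ∃ e', P e' a)) h
    exact ext _ _ (Fin.ext he) rfl

noncomputable def sumNat {N : ℕ} (β : Fin N → Type*) [∀ i, Finite (β i)] :
    Nat.card (Σ i, β i) = ∑ i, Nat.card (β i) := by
  have : ∀ i, Fintype (β i) := fun i => Fintype.ofFinite _
  simp [Nat.card_eq_fintype_card, Fintype.card_sigma]

end Stmt12Aux

namespace Stmt12Aux
variable {n k : ℕ}

def Ends (p : Pat) (σ : Fin n → Fin k) (e : ℕ) : Prop := ∃ i, POcc p σ i ∧ i + p.m = e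

def MinEndAt (p : Pat) (σ : Fin n → Fin k) (e : ℕ) : Prop :=
  Ends p σ e ∧ ∀ e' < e, ¬ Ends p σ e'

lemma minEndAt_unique {p : Pat} {σ : Fin n → Fin k} {e e' : ℕ}
    (h : MinEndAt p σ e) (h' : MinEndAt p σ e') : e = e' := by
  by_contra hne
  rcases Nat.lt_or_ge e e' with hlt | hge
  · exact h'.2 e hlt h.1
  · exact h.2 e' (by omega) h'.1

lemma minEndAt_le {p : Pat} {σ : Fin n → Fin k} {e : ℕ} (h : MinEndAt p σ e) : e ≤ n := by
  obtain ⟨⟨i, ⟨hb, _⟩, hie⟩, _⟩ := h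
  omega

lemma minEndAt_exists {p : Pat} {σ : Fin n → Fin k} (h : ∃ i, POcc p σ i) :
    ∃ e, MinEndAt p σ e := by
  classical
  obtain ⟨i, hi⟩ := h
  have hE : ∃ e, Ends p σ e := ⟨i + p.m, i, hi, rfl⟩
  exact ⟨Nat.find hE, Nat.find_spec hE, fun e' he' => Nat.find_min hE he'⟩

lemma cf_cons_iff {p : Pat} {L : List Pat} {σ : Fin n → Fin k} :
    CF (p :: L) σ 0 ↔ ∃ e, MinEndAt p σ e ∧ CF L σ e := by
  constructor
  · rintro ⟨i, -, ho, hc⟩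
    obtain ⟨e, he⟩ := minEndAt_exists ⟨i, ho⟩
    refine ⟨e, he, cf_mono ?_ hc⟩
    by_contra hgt
    exact he.2 (i + p.m) (by omega) ⟨i, ho, rfl⟩
  · rintro ⟨e, ⟨⟨i, ho, hie⟩, -⟩, hc⟩
    exact ⟨i, Nat.zero_le _, ho, by rwa [hie]⟩

lemma not_cf_cons_iff {p : Pat} {L : List Pat} {σ : Fin n → Fin k} :
    ¬ CF (p :: L) σ 0 ↔
      AvoidsPat p.pat σ ∨ ∃ e, MinEndAt p σ e ∧ ¬ CF L σ e := by
  rw [cf_cons_iff]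
  constructor
  · intro h
    by_cases ha : AvoidsPat p.pat σ
    · exact Or.inl ha
    · right
      have : ∃ i, POcc p σ i := by
        simp only [AvoidsPat, not_forall, not_not] at ha
        exact ha
      obtain ⟨e, he⟩ := minEndAt_exists this
      exact ⟨e, he, fun hc => h ⟨e, he, hc⟩⟩
  · rintro (ha | ⟨e, he, hnc⟩) ⟨e', he', hc'⟩
    · obtain ⟨i, ho, -⟩ := he'.1
      exact ha i ho
    · rw [minEndAt_unique he he'] at hnc
      exact hnc hc'

lemma fe_take {p : Pat} {σ : Fin n → Fin k} {e : ℕ} (he : e ≤ n) :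
    MinEndAt p σ e ↔ FE p (takeW σ e he) := by
  constructor
  · rintro ⟨⟨i, ho, hie⟩, hmin⟩
    constructor
    · exact ⟨i, (occ_take he).2 ⟨ho, by omega⟩⟩
    · intro i' ho'
      obtain ⟨ho', hle⟩ := (occ_take he).1 ho'
      by_contra hne
      exact hmin (i' + p.m) (by omega) ⟨i', ho', rfl⟩
  · rintro ⟨⟨i, ho⟩, hall⟩
    obtain ⟨hoσ, hle⟩ := (occ_take he).1 ho
    have hie : i + p.m = e := hall i ho
    refine ⟨⟨i, hoσ, hie⟩, ?_⟩
    rintro e' he' ⟨i', ho', hie'⟩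
    have : POcc p (takeW σ e he) i' := (occ_take he).2 ⟨ho', by omega⟩
    have := hall i' this
    omega

noncomputable def subtypeOrDisjointEquiv {α : Type*} (P Q : α → Prop) (h : ∀ a, P a → Q a → False) :
    {a // P a ∨ Q a} ≃ {a // P a} ⊕ {a // Q a} := by
  classical
  exact
  { toFun := fun a => if hp : P a.1 then Sum.inl ⟨a.1, hp⟩
      else Sum.inr ⟨a.1, a.2.resolve_left hp⟩
    invFun := fun x => x.elim (fun a => ⟨a.1, Or.inl a.2⟩) (fun a => ⟨a.1, Or.inr a.2⟩)
    left_inv := fun a => by by_cases hp : P a.1 <;> simp [hp]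
    right_inv := fun x => by
      rcases x with a | a
      · simp [a.2]
      · have : ¬ P a.1 := fun hp => h a.1 hp a.2
        simp [this] }

lemma ANL_cons (p : Pat) (L : List Pat) (nn : ℕ) :
    ANL k nn (p :: L) = AvN k nn p + ∑ e : Fin (nn + 1), BN k e p * ANL k (nn - e) L := by
  classical
  set P : ℕ → (Fin nn → Fin k) → Prop :=
    fun e σ => MinEndAt p σ e ∧ ¬ CF L σ e with hP
  have step1 : ANL k nn (p :: L) =
      Nat.card {σ : Fin nn → Fin k // AvoidsPat p.pat σ ∨ ∃ e, P e σ} := by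
    apply Nat.card_congr
    exact Equiv.subtypeEquiv (Equiv.refl _) fun σ => by
      simpa using not_cf_cons_iff
  rw [step1]
  have step2 : Nat.card {σ : Fin nn → Fin k // AvoidsPat p.pat σ ∨ ∃ e, P e σ} =
      AvN k nn p + Nat.card {σ : Fin nn → Fin k // ∃ e, P e σ} := by
    rw [Nat.card_congr (subtypeOrDisjointEquiv _ _ ?_), Nat.card_sum, AvN]
    intro σ ha ⟨e, ⟨⟨i, ho, _⟩, _⟩, _⟩
    exact ha i ho
  rw [step2]
  congr 1
  have hbound : ∀ (σ : Fin nn → Fin k) e, P e σ → e < nn + 1 := by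
    rintro σ e ⟨hme, -⟩
    have := minEndAt_le hme
    omega
  have huniq : ∀ (σ : Fin nn → Fin k) e e', P e σ → P e' σ → e = e' :=
    fun σ e e' h h' => minEndAt_unique h.1 h'.1
  rw [Nat.card_congr (existsUniqueSigmaEquiv P hbound huniq), sumNat]
  apply Finset.sum_congr rfl
  intro e _
  have he : (e : ℕ) ≤ nn := by omega
  have equiv1 : {σ : Fin nn → Fin k // P (e : ℕ) σ} ≃
      {w : Fin (e : ℕ) → Fin k // FE p w} × {u : Fin (nn - (e : ℕ)) → Fin k // ¬ CF L u 0} := by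
    refine Equiv.trans (Equiv.subtypeEquiv (wordSplit (e : ℕ) nn k he) fun σ => ?_)
      (Equiv.subtypeProdEquivProd)
    show P (e : ℕ) σ ↔ FE p (takeW σ (e : ℕ) he) ∧ ¬ CF L (dropW σ (e : ℕ) he) 0
    rw [hP]
    constructor
    · rintro ⟨hme, hnc⟩
      refine ⟨(fe_take he).1 hme, fun hc => hnc ?_⟩
      have := (cf_drop he 0).1 hc
      simpa using this
    · rintro ⟨hfe, hnc⟩
      refine ⟨(fe_take he).2 hfe, fun hc => hnc ?_⟩
      rw [cf_drop he 0]
      simpa using hc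
  rw [Nat.card_congr equiv1, Nat.card_prod]
  rfl

end Stmt12Aux

namespace Stmt12Aux
variable {k : ℕ}

lemma avoids_take_iff {p : Pat} {e : ℕ} (σ : Fin (e + 1) → Fin k) :
    AvoidsPat p.pat (takeW σ e (by omega)) ↔ AvoidsPat p.pat σ ∨ FE p σ := by
  constructor
  · intro h
    by_cases ha : AvoidsPat p.pat σ
    · exact Or.inl ha
    · right
      have hocc : ∃ i, POcc p σ i := by
        simp only [AvoidsPat, not_forall, not_not] at ha
        exact ha
      refine ⟨hocc, fun i ho => ?_⟩
      have hb : i + p.m ≤ e + 1 := by obtain ⟨hb, -⟩ := ho; exact hb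
      by_contra hne
      exact h i ((occ_take (by omega)).2 ⟨ho, by omega⟩)
  · rintro (ha | ⟨-, hall⟩) i ho
    · exact ha i ((occ_take (by omega)).1 ho).1
    · obtain ⟨hoσ, hle⟩ := (occ_take (p := p) (by omega)).1 ho
      have := hall i hoσ
      omega

lemma card_funUnit : Nat.card (Fin 1 → Fin k) = k := by
  rw [Nat.card_congr (Equiv.funUnique (Fin 1) (Fin k))]
  simp

lemma bn_identity (p : Pat) (e : ℕ) :
    AvN k (e + 1) p + BN k (e + 1) p = AvN k e p * k := by
  classical
  have h1 : AvN k (e + 1) p + BN k (e + 1) p =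
      Nat.card {σ : Fin (e + 1) → Fin k // AvoidsPat p.pat σ ∨ FE p σ} := by
    rw [AvN, BN, ← Nat.card_sum]
    apply Nat.card_congr
    refine (subtypeOrDisjointEquiv _ _ ?_).symm
    rintro σ ha ⟨⟨i, ho⟩, -⟩
    exact ha i ho
  rw [h1]
  have h2 : Nat.card {σ : Fin (e + 1) → Fin k // AvoidsPat p.pat σ ∨ FE p σ} =
      Nat.card {σ : Fin (e + 1) → Fin k // AvoidsPat p.pat (takeW σ e (by omega))} := by
    apply Nat.card_congr
    exact Equiv.subtypeEquiv (Equiv.refl _) fun σ => by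
      simpa using (avoids_take_iff σ).symm
  rw [h2]
  have h3 : {σ : Fin (e + 1) → Fin k // AvoidsPat p.pat (takeW σ e (by omega))} ≃
      {w : Fin e → Fin k // AvoidsPat p.pat w} × {u : Fin (e + 1 - e) → Fin k // True} :=
    Equiv.trans (Equiv.subtypeEquiv (wordSplit e (e + 1) k (by omega)) fun σ =>
      ⟨fun h => ⟨h, trivial⟩, fun h => h.1⟩) Equiv.subtypeProdEquivProd
  rw [Nat.card_congr h3, Nat.card_prod]
  congr 1
  rw [Nat.card_congr (Equiv.subtypeUnivEquiv fun _ => trivial)]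
  have : e + 1 - e = 1 := by omega
  rw [this, card_funUnit]

lemma bn_zero (p : Pat) : BN k 0 p = if p.m = 0 then 1 else 0 := by
  by_cases hm : p.m = 0
  · rw [if_pos hm]
    have hfe : ∀ w : Fin 0 → Fin k, FE p w := by
      intro w
      constructor
      · exact ⟨0, by omega, fun a b => absurd a.2 (by omega)⟩
      · rintro i ⟨hb, -⟩
        omega
    rw [BN, Nat.card_congr (Equiv.subtypeUnivEquiv hfe)]
    exact Nat.card_unique
  · rw [if_neg hm, BN]
    have : IsEmpty {w : Fin 0 → Fin k // FE p w} := by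
      refine ⟨?_⟩
      rintro ⟨w, ⟨i, hb, -⟩, -⟩
      omega
    simp

lemma avn_triv (p : Pat) (f : (Fin p.m → Fin p.l) → (Fin p.m → Fin p.l))
    (hf : IsTrivialBij f) (t : ℕ) :
    AvN k t p = AvN k t ⟨p.m, p.l, f p.pat⟩ :=
  avoidCard_triv f hf p.pat

lemma bn_triv (p : Pat) (f : (Fin p.m → Fin p.l) → (Fin p.m → Fin p.l))
    (hf : IsTrivialBij f) (e : ℕ) :
    BN k e p = BN k e ⟨p.m, p.l, f p.pat⟩ := by
  induction e with
  | zero => rw [bn_zero, bn_zero]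
  | succ e _ =>
    have h1 := bn_identity (k := k) p e
    have h2 := bn_identity (k := k) (⟨p.m, p.l, f p.pat⟩ : Pat) e
    have h3 := avn_triv (k := k) p f hf (e + 1)
    have h4 := avn_triv (k := k) p f hf e
    rw [h4] at h1
    omega

def PRel (k : ℕ) (p q : Pat) : Prop :=
  (∀ t, AvN k t p = AvN k t q) ∧ ∀ e, BN k e p = BN k e q

lemma ANL_congr {L L' : List Pat} (h : List.Forall₂ (PRel k) L L') :
    ∀ n, ANL k n L = ANL k n L' := by
  induction h with
  | nil => intro n; rfl
  | @cons p q L L' hpq hLL ih =>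
    intro n
    rw [ANL_cons, ANL_cons, hpq.1 n]
    congr 1
    apply Finset.sum_congr rfl
    intro e _
    rw [hpq.2 e, ih]

end Stmt12Aux

namespace Stmt12Aux

lemma cf_ofFn {n k : ℕ} (σ : Fin n → Fin k) :
    ∀ (c : ℕ) (g : Fin c → Pat) (t : ℕ),
      CF (List.ofFn g) σ t ↔
        ∃ i : Fin c → ℕ, (∀ h : 0 < c, t ≤ i ⟨0, h⟩) ∧
          (∀ (j : Fin c) (h : (j : ℕ) + 1 < c), i j + (g j).m ≤ i ⟨(j : ℕ) + 1, h⟩) ∧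
          ∀ j, POcc (g j) σ (i j) := by
  intro c
  induction c with
  | zero =>
    intro g t
    simp only [List.ofFn_zero]
    constructor
    · intro _
      exact ⟨fun j => j.elim0, fun h => absurd h (by omega), fun j => j.elim0,
        fun j => j.elim0⟩
    · intro _
      trivial
  | succ c ih =>
    intro g t
    rw [List.ofFn_succ]
    show (∃ i₀, t ≤ i₀ ∧ POcc (g 0) σ i₀ ∧
      CF (List.ofFn fun j : Fin c => g j.succ) σ (i₀ + (g 0).m)) ↔ _
    constructor
    · rintro ⟨i₀, ht, ho, hc⟩
      obtain ⟨i', h1', h2', h3'⟩ := (ih _ _).1 hc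
      refine ⟨Fin.cases i₀ i', ?_, ?_, ?_⟩
      · intro h
        dsimp only
        have e : (⟨0, h⟩ : Fin (c + 1)) = 0 := by apply Fin.ext; simp
        rw [e, Fin.cases_zero]
        exact ht
      · intro j h
        dsimp only
        induction j using Fin.cases with
        | zero =>
          have h0c : 0 < c := by simpa using h
          have e : (⟨((0 : Fin (c + 1)) : ℕ) + 1, h⟩ : Fin (c + 1)) =
              Fin.succ ⟨0, h0c⟩ := by apply Fin.ext; simp
          rw [e, Fin.cases_zero, Fin.cases_succ]
          exact h1' h0c
        | succ j =>
          have hjc : (j : ℕ) + 1 < c := by simpa using h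
          have e : (⟨((j.succ : Fin (c + 1)) : ℕ) + 1, h⟩ : Fin (c + 1)) =
              Fin.succ ⟨(j : ℕ) + 1, hjc⟩ := by apply Fin.ext; simp
          rw [e, Fin.cases_succ, Fin.cases_succ]
          exact h2' j hjc
      · intro j
        dsimp only
        induction j using Fin.cases with
        | zero => rw [Fin.cases_zero]; exact ho
        | succ j => rw [Fin.cases_succ]; exact h3' j
    · rintro ⟨i, h1, h2, h3⟩
      have h00 : (0 : Fin (c + 1)) = ⟨0, by omega⟩ := by apply Fin.ext; simp
      refine ⟨i 0, by rw [h00]; exact h1 (by omega), h3 0, ?_⟩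
      rw [ih]
      refine ⟨fun j => i j.succ, ?_, ?_, ?_⟩
      · intro h
        dsimp only
        have h0 : ((0 : Fin (c + 1)) : ℕ) + 1 < c + 1 := by simp; omega
        have := h2 0 h0
        convert this using 2
        exact Fin.ext (by simp)
      · intro j h
        dsimp only
        have hsj : ((j.succ : Fin (c + 1)) : ℕ) + 1 < c + 1 := by simp; omega
        have := h2 j.succ hsj
        convert this using 2
        exact Fin.ext (by simp)
      · intro j
        exact h3 j.succ

lemma containsMulti_iff_cf {s n k : ℕ} {m r : Fin s → ℕ}
    (τ : ∀ j : Fin s, Fin (m j) → Fin (r j)) (σ : Fin n → Fin k) :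
    ContainsMulti τ σ ↔ CF (List.ofFn fun j => Pat.mk (m j) (r j) (τ j)) σ 0 := by
  rw [cf_ofFn]
  constructor
  · rintro ⟨i, hchain, hocc⟩
    exact ⟨i, fun _ => Nat.zero_le _, hchain, hocc⟩
  · rintro ⟨i, -, hchain, hocc⟩
    exact ⟨i, hchain, hocc⟩

lemma forall₂_ofFn {k c : ℕ} (g g' : Fin c → Pat) (h : ∀ j, PRel k (g j) (g' j)) :
    List.Forall₂ (PRel k) (List.ofFn g) (List.ofFn g') := by
  rw [List.forall₂_iff_get]
  refine ⟨by simp, fun i h₁ h₂ => ?_⟩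
  simp only [List.get_ofFn]
  apply h

end Stmt12Aux


theorem stmt12 (s : ℕ) (m r : Fin (s + 1) → ℕ)
    (τ : ∀ j : Fin (s + 1), Fin (m j) → Fin (r j))
    (f : ∀ j : Fin (s + 1), (Fin (m j) → Fin (r j)) → (Fin (m j) → Fin (r j)))
    (hf : ∀ j, IsTrivialBij (f j))
    (n k : ℕ) (hk : 1 ≤ k) :
    Nat.card {σ : Fin n → Fin k // ¬ ContainsMulti τ σ} =
      Nat.card {σ : Fin n → Fin k // ¬ ContainsMulti (fun j => f j (τ j)) σ} := by
  classical
  set g : Fin (s + 1) → Stmt12Aux.Pat := fun j => ⟨m j, r j, τ j⟩ with hg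
  set g' : Fin (s + 1) → Stmt12Aux.Pat := fun j => ⟨m j, r j, f j (τ j)⟩ with hg'
  have e1 : Nat.card {σ : Fin n → Fin k // ¬ ContainsMulti τ σ} =
      Stmt12Aux.ANL k n (List.ofFn g) := by
    apply Nat.card_congr
    exact Equiv.subtypeEquiv (Equiv.refl _) fun σ => by
      simpa using not_congr (Stmt12Aux.containsMulti_iff_cf τ σ)
  have e2 : Nat.card {σ : Fin n → Fin k // ¬ ContainsMulti (fun j => f j (τ j)) σ} =
      Stmt12Aux.ANL k n (List.ofFn g') := by
    apply Nat.card_congr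
    exact Equiv.subtypeEquiv (Equiv.refl _) fun σ => by
      simpa using not_congr (Stmt12Aux.containsMulti_iff_cf (fun j => f j (τ j)) σ)
  rw [e1, e2]
  apply Stmt12Aux.ANL_congr
  apply Stmt12Aux.forall₂_ofFn
  intro j
  exact ⟨Stmt12Aux.avn_triv (g j) (f j) (hf j), Stmt12Aux.bn_triv (g j) (f j) (hf j)⟩
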